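/- Let Φ : [s₀, ∞) → ℝ be differentiable with Φ(s₀) = x₀ and suppose (d/ds)Φ(s)² ≥ 3Φ(s)² - 2C|Φ(s)|^{4/3} for all s ≥ s₀, where C > 0 and |x₀|^{2/3} > (2/3)C. Then |Φ(s)| ≥ (|x₀|^{2/3} - (2/3)C)^{3/2} e^{(3/2)(s - s₀)} for all s ≥ s₀. -/
import Mathlib

open Real Set

theorem stmt11 (s₀ x₀ C : ℝ) (Φ : ℝ → ℝ) (hC : 0 < C)
    (hΦ0 : Φ s₀ = x₀)
    (hx₀ : (2/3) * C < |x₀| ^ ((2:ℝ)/3))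
    (hdiff : Differentiable ℝ Φ)
    (hineq : ∀ s : ℝ, s₀ ≤ s →
      3 * Φ s ^ 2 - 2 * C * |Φ s| ^ ((4:ℝ)/3) ≤ deriv (fun t => Φ t ^ 2) s) :
    ∀ s : ℝ, s₀ ≤ s →
      (|x₀| ^ ((2:ℝ)/3) - (2/3) * C) ^ ((3:ℝ)/2) * Real.exp ((3/2) * (s - s₀)) ≤ |Φ s| := by
  set F : ℝ → ℝ := fun t => Φ t ^ 2 with hFdef
  have hFdiff : Differentiable ℝ F := hdiff.pow 2
  set b : ℝ := 2/3 * C with hbdef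
  set u₀ : ℝ := |x₀| ^ ((2:ℝ)/3) with hu₀def
  have hb0 : 0 < b := by rw [hbdef]; positivity
  have hbu : b < u₀ := hx₀
  have habs2 : ∀ t, |Φ t| ^ ((2:ℝ)) = F t := by
    intro t
    rw [show ((2:ℝ)) = ((2:ℕ):ℝ) from by norm_num, Real.rpow_natCast, sq_abs]
  have hF23 : ∀ t, |Φ t| ^ ((4:ℝ)/3) = F t ^ ((2:ℝ)/3) := by
    intro t
    rw [← habs2, ← Real.rpow_mul (abs_nonneg _)]; norm_num
  have hF13 : ∀ t, F t ^ ((1:ℝ)/3) = |Φ t| ^ ((2:ℝ)/3) := by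
    intro t
    rw [← habs2, ← Real.rpow_mul (abs_nonneg _)]; norm_num
  set m : ℝ := (b + u₀) / 2 with hmdef
  have hm0 : 0 < m := by rw [hmdef]; linarith
  have hbm : b < m := by rw [hmdef]; linarith
  have hmu : m < u₀ := by rw [hmdef]; linarith
  set c : ℝ := m ^ (3:ℝ) with hcdef
  have hc0 : 0 < c := Real.rpow_pos_of_pos hm0 _
  have hFs₀ : F s₀ = u₀ ^ (3:ℝ) := by
    have h2 : |x₀| ^ ((2:ℝ)) = F s₀ := by rw [← hΦ0]; exact habs2 s₀
    rw [hu₀def, ← Real.rpow_mul (abs_nonneg _)]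
    rw [show (2:ℝ)/3*3 = 2 from by norm_num]
    exact h2.symm
  have hcFs₀ : c < F s₀ := by
    rw [hFs₀, hcdef]
    exact Real.rpow_lt_rpow hm0.le hmu (by norm_num)
  -- Step 1: F stays above c on [s₀, ∞)
  have key : ∀ t, s₀ ≤ t → c < F t := by
    by_contra h
    push_neg at h
    obtain ⟨t₁, ht₁, hFt₁⟩ := h
    set A : Set ℝ := {t | s₀ ≤ t ∧ F t ≤ c} with hAdef
    have hAne : A.Nonempty := ⟨t₁, ht₁, hFt₁⟩
    have hAclosed : IsClosed A := by
      have : A = Ici s₀ ∩ F ⁻¹' (Iic c) := by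
        ext t
        simp only [hAdef, Set.mem_setOf_eq, Set.mem_inter_iff, Set.mem_Ici,
          Set.mem_preimage, Set.mem_Iic]
      rw [this]
      exact isClosed_Ici.inter (isClosed_Iic.preimage hFdiff.continuous)
    have hAbdd : BddBelow A := ⟨s₀, fun x hx => hx.1⟩
    set T := sInf A with hTdef
    have hTA : T ∈ A := hAclosed.csInf_mem hAne hAbdd
    have hs₀T : s₀ < T := by
      rcases lt_or_eq_of_le hTA.1 with h' | h'
      · exact h'
      · exfalso; rw [← h'] at hTA; exact absurd hTA.2 (not_le.2 hcFs₀)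
    have hlt : ∀ r ∈ Ico s₀ T, c < F r := by
      intro r hr
      by_contra hcon
      push_neg at hcon
      exact absurd (csInf_le hAbdd ⟨hr.1, hcon⟩) (not_le.2 hr.2)
    have hmono : MonotoneOn F (Icc s₀ T) := by
      apply monotoneOn_of_deriv_nonneg (convex_Icc _ _)
        hFdiff.continuous.continuousOn hFdiff.differentiableOn
      intro r hr
      rw [interior_Icc] at hr
      have hFr : c < F r := hlt r ⟨hr.1.le, hr.2⟩
      have hFrpos : 0 < F r := hc0.trans hFr
      have h13 : m < F r ^ ((1:ℝ)/3) := by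
        have := Real.rpow_lt_rpow hc0.le hFr (by norm_num : (0:ℝ) < 1/3)
        rwa [hcdef, ← Real.rpow_mul hm0.le, (by norm_num : (3:ℝ) * (1/3) = 1),
          Real.rpow_one] at this
      have h2C : 2 * C ≤ 3 * F r ^ ((1:ℝ)/3) := by
        have : 2 * C = 3 * b := by rw [hbdef]; ring
        rw [this]; nlinarith
      have hsplit : F r = F r ^ ((1:ℝ)/3) * F r ^ ((2:ℝ)/3) := by
        rw [← Real.rpow_add hFrpos]; norm_num
      have h23pos : 0 < F r ^ ((2:ℝ)/3) := Real.rpow_pos_of_pos hFrpos _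
      have hge : 0 ≤ 3 * F r - 2 * C * F r ^ ((2:ℝ)/3) := by
        nlinarith
      have := hineq r hr.1.le
      rw [hF23] at this
      have hFr' : F r = Φ r ^ 2 := rfl
      linarith
    have : F s₀ ≤ F T := hmono ⟨le_refl _, hs₀T.le⟩ ⟨hs₀T.le, le_refl _⟩ hs₀T.le
    linarith [hTA.2]
  -- Step 2: Gronwall
  set u : ℝ → ℝ := fun t => F t ^ ((1:ℝ)/3) with hudef
  have hFpos : ∀ t, s₀ ≤ t → 0 < F t := fun t ht => hc0.trans (key t ht)
  have hud : ∀ t, s₀ ≤ t →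
      HasDerivAt u (deriv F t * (1/3) * F t ^ ((1:ℝ)/3 - 1)) t := by
    intro t ht
    exact ((hFdiff t).hasDerivAt).rpow_const (Or.inl (hFpos t ht).ne')
  set g : ℝ → ℝ := fun t => (u t - b) * Real.exp (s₀ - t) with hgdef
  have hgd : ∀ t, s₀ ≤ t →
      HasDerivAt g (deriv F t * (1/3) * F t ^ ((1:ℝ)/3 - 1) * Real.exp (s₀ - t)
        + (u t - b) * (Real.exp (s₀ - t) * (-1))) t := by
    intro t ht
    have hexp : HasDerivAt (fun r => Real.exp (s₀ - r)) (Real.exp (s₀ - t) * (-1)) t := by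
      have : HasDerivAt (fun r : ℝ => s₀ - r) (-1) t := by
        simpa using (hasDerivAt_id t).const_sub s₀
      exact this.exp
    exact ((hud t ht).sub_const b).mul hexp
  have hderiv_nonneg : ∀ t, s₀ < t → 0 ≤ deriv g t := by
    intro t ht
    have hFt : 0 < F t := hFpos t ht.le
    rw [(hgd t ht.le).deriv]
    have hbound : u t - b ≤ deriv F t * (1/3) * F t ^ ((1:ℝ)/3 - 1) := by
      have h1 : 3 * F t - 2 * C * F t ^ ((2:ℝ)/3) ≤ deriv F t := by
        have := hineq t ht.le
        rwa [hF23] at this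
      have hpow : 0 < F t ^ ((1:ℝ)/3 - 1) := Real.rpow_pos_of_pos hFt _
      have e1 : F t ^ ((2:ℝ)/3) * F t ^ ((1:ℝ)/3 - 1) = 1 := by
        rw [← Real.rpow_add hFt]; norm_num
      have e2 : F t * F t ^ ((1:ℝ)/3 - 1) = u t := by
        rw [hudef]
        nth_rewrite 1 [← Real.rpow_one (F t)]
        rw [← Real.rpow_add hFt]; norm_num
      have := mul_le_mul_of_nonneg_right h1 (le_of_lt (by positivity : 0 < (1/3) * F t ^ ((1:ℝ)/3 - 1)))
      calc u t - b = (3 * F t - 2 * C * F t ^ ((2:ℝ)/3)) * ((1/3) * F t ^ ((1:ℝ)/3 - 1)) := by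
            rw [hbdef]
            have : (3 * F t - 2 * C * F t ^ ((2:ℝ)/3)) * ((1/3) * F t ^ ((1:ℝ)/3 - 1))
                = (F t * F t ^ ((1:ℝ)/3 - 1)) - 2/3 * C * (F t ^ ((2:ℝ)/3) * F t ^ ((1:ℝ)/3 - 1)) := by
              ring
            rw [this, e1, e2]; ring
        _ ≤ deriv F t * ((1/3) * F t ^ ((1:ℝ)/3 - 1)) := this
        _ = deriv F t * (1/3) * F t ^ ((1:ℝ)/3 - 1) := by ring
    have hexp_pos : 0 < Real.exp (s₀ - t) := Real.exp_pos _
    nlinarith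
  have hgmono : MonotoneOn g (Ici s₀) := by
    apply monotoneOn_of_deriv_nonneg (convex_Ici _)
    · intro t ht
      exact ((hgd t ht).differentiableAt).continuousAt.continuousWithinAt
    · intro t ht
      rw [interior_Ici] at ht
      exact ((hgd t ht.le).differentiableAt).differentiableWithinAt
    · intro t ht
      rw [interior_Ici] at ht
      exact hderiv_nonneg t ht
  have hus₀ : u s₀ = u₀ := by
    show F s₀ ^ ((1:ℝ)/3) = u₀
    rw [hF13, hΦ0]
  intro s hs
  have hgs : g s₀ ≤ g s := hgmono (self_mem_Ici) hs hs
  have hgs₀ : g s₀ = u₀ - b := by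
    rw [hgdef]; simp [hus₀]
  have hmain : (u₀ - b) * Real.exp (s - s₀) ≤ u s - b := by
    have : u₀ - b ≤ (u s - b) * Real.exp (s₀ - s) := by rw [← hgs₀]; exact hgs
    have h' := mul_le_mul_of_nonneg_right this (Real.exp_pos (s - s₀)).le
    rwa [mul_assoc, ← Real.exp_add, (by ring : s₀ - s + (s - s₀) = 0), Real.exp_zero,
      mul_one] at h'
  have hub : u s - b ≤ u s := by linarith
  have hlhs_nonneg : 0 ≤ (u₀ - b) * Real.exp (s - s₀) := by
    have : (0:ℝ) ≤ u₀ - b := by linarith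
    positivity
  have hfinal : ((u₀ - b) * Real.exp (s - s₀)) ^ ((3:ℝ)/2) ≤ u s ^ ((3:ℝ)/2) :=
    Real.rpow_le_rpow hlhs_nonneg (hmain.trans hub) (by norm_num)
  have hus32 : u s ^ ((3:ℝ)/2) = |Φ s| := by
    show (F s ^ ((1:ℝ)/3)) ^ ((3:ℝ)/2) = |Φ s|
    rw [← habs2, ← Real.rpow_mul (abs_nonneg _), ← Real.rpow_mul (abs_nonneg _)]
    norm_num
  have hsplit2 : ((u₀ - b) * Real.exp (s - s₀)) ^ ((3:ℝ)/2)
      = (u₀ - b) ^ ((3:ℝ)/2) * Real.exp ((3/2) * (s - s₀)) := by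
    rw [Real.mul_rpow (by linarith) (Real.exp_pos _).le,
      ← Real.exp_mul, mul_comm (s - s₀)]
  rw [← hus32, ← hsplit2]
  exact hfinal
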